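/- Let A = [A_{ij}] be a nonzero symmetric n×n matrix with entries in {0,1} and zero diagonal, and let f_A(x) = Σ_{i,j=1}^n A_{ij} x_i² x_j². Let G be the simple graph on vertex set {1,…,n} whose adjacency matrix is A, and let κ(A) be the clique number of G (the maximal cardinality of a clique). Then κ(A) ∈ {1,…,n} and max{ f_A(x) : x ∈ ℝ^n, ‖x‖₂ = 1 } = max{ |f_A(x)| : x ∈ ℂ^n, ‖x‖₂ = 1 } = 1 − 1/κ(A). -/

import Mathlib

open Finset in
private lemma ms_aux {n : ℕ} (A : Matrix (Fin n) (Fin n) ℝ)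
    (hsym : A.IsSymm) (h01 : ∀ i j, A i j = 0 ∨ A i j = 1) (hdiag : ∀ i, A i i = 0)
    (G : SimpleGraph (Fin n)) (hG : ∀ i j, G.Adj i j ↔ A i j = 1)
    (κ : ℕ) (hκ : IsGreatest {k : ℕ | ∃ t : Finset (Fin n), G.IsNClique k t} κ) :
    ∀ m (y : Fin n → ℝ), (∀ i, 0 ≤ y i) → (∑ i, y i) = 1 →
      (univ.filter (fun i => y i ≠ 0)).card ≤ m →
      ∑ i, ∑ j, A i j * y i * y j ≤ 1 - 1 / (κ : ℝ) := by
  intro m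
  induction m with
  | zero =>
    intro y hy hsum hcard
    exfalso
    have : ∀ i, y i = 0 := by
      intro i
      by_contra h
      have : i ∈ univ.filter (fun i => y i ≠ 0) := by simp [h]
      have := card_pos.mpr ⟨i, this⟩
      omega
    simp [this] at hsum
  | succ m ih =>
    intro y hy hsum hcard
    set S := univ.filter (fun i => y i ≠ 0) with hS
    by_cases hclique : ∀ i ∈ S, ∀ j ∈ S, i ≠ j → A i j = 1
    · -- support is a clique
      have hSy : ∀ k, k ∉ S → y k = 0 := by
        intro k hk; by_contra h; exact hk (by simp [hS, h])
      have hSsum : ∑ i ∈ S, y i = 1 := by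
        rw [← hsum]
        exact sum_subset (subset_univ S) (fun k _ hk => hSy k hk)
      have hScard : S.card ≤ κ := by
        apply hκ.2
        refine ⟨S, ?_, rfl⟩
        intro i hi j hj hij
        exact (hG i j).2 (hclique i hi j hj hij)
      have hSpos : 0 < S.card := by
        rcases eq_or_lt_of_le (Nat.zero_le S.card) with h | h
        · exfalso
          have : S = ∅ := card_eq_zero.mp h.symm
          simp [this] at hSsum
        · exact h
      -- restrict the quadratic form to S
      have hq : ∑ i, ∑ j, A i j * y i * y j = ∑ i ∈ S, ∑ j ∈ S, A i j * y i * y j := by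
        rw [← sum_subset (subset_univ S) (fun k _ hk => by simp [hSy k hk])]
        refine sum_congr rfl fun i _ => ?_
        rw [← sum_subset (subset_univ S) (fun k _ hk => by simp [hSy k hk])]
      have hq2 : ∑ i ∈ S, ∑ j ∈ S, A i j * y i * y j
          = (∑ i ∈ S, y i) ^ 2 - ∑ i ∈ S, (y i) ^ 2 := by
        have : ∀ i ∈ S, ∀ j ∈ S, A i j * y i * y j
            = y i * y j - (if i = j then y i * y j else 0) := by
          intro i hi j hj
          by_cases hij : i = j
          · subst hij; simp [hdiag i]
          · simp [hij, hclique i hi j hj hij]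
        calc ∑ i ∈ S, ∑ j ∈ S, A i j * y i * y j
            = ∑ i ∈ S, ∑ j ∈ S, (y i * y j - if i = j then y i * y j else 0) := by
              refine sum_congr rfl fun i hi => sum_congr rfl fun j hj => this i hi j hj
          _ = ∑ i ∈ S, ((y i * ∑ j ∈ S, y j) - y i * y i) := by
              refine sum_congr rfl fun i hi => ?_
              rw [sum_sub_distrib, ← mul_sum, sum_ite_eq, if_pos hi]
          _ = (∑ i ∈ S, y i) ^ 2 - ∑ i ∈ S, (y i) ^ 2 := by
              rw [sum_sub_distrib, ← sum_mul, sq]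
              ring_nf
      have hcs : (1 : ℝ) ≤ S.card * ∑ i ∈ S, (y i) ^ 2 := by
        have := sq_sum_le_card_mul_sum_sq (s := S) (f := y)
        rw [hSsum] at this
        simpa using this
      have hcard' : (1 : ℝ) / κ ≤ ∑ i ∈ S, (y i) ^ 2 := by
        have h1 : (1 : ℝ) / κ ≤ 1 / S.card := by
          apply one_div_le_one_div_of_le
          · exact_mod_cast hSpos
          · exact_mod_cast hScard
        refine h1.trans ?_
        rw [div_le_iff₀ (by exact_mod_cast hSpos)]
        linarith [hcs]
      rw [hq, hq2, hSsum]
      linarith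
    · -- support not a clique: shift mass
      push_neg at hclique
      obtain ⟨i, hi, j, hj, hij, hAij⟩ := hclique
      have hAij0 : A i j = 0 := (h01 i j).resolve_right hAij
      have hAji0 : A j i = 0 := by rw [hsym.apply]; exact hAij0
      set s : Fin n → ℝ := fun k => ∑ l, A k l * y l with hs
      -- key step: move all mass from b to a when s b ≤ s a
      have key : ∀ a b : Fin n, a ≠ b → y a ≠ 0 → y b ≠ 0 → A a b = 0 → A b a = 0 →
          s b ≤ s a → ∑ i, ∑ j, A i j * y i * y j ≤ 1 - 1 / (κ : ℝ) := by
        intro a b hab ha hb hab0 hba0 hsle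
        set d : Fin n → ℝ := fun k => (if k = a then y b else 0) + (if k = b then -(y b) else 0)
          with hd
        set y' : Fin n → ℝ := fun k => y k + d k with hy'
        have hy'a : y' a = y a + y b := by simp [hy', hd, hab]
        have hy'b : y' b = 0 := by simp [hy', hd, Ne.symm hab]
        have hy'k : ∀ k, k ≠ a → k ≠ b → y' k = y k := by
          intro k hka hkb; simp [hy', hd, hka, hkb]
        have hy'nn : ∀ k, 0 ≤ y' k := by
          intro k
          rcases eq_or_ne k a with rfl | hka
          · rw [hy'a]; exact add_nonneg (hy k) (hy b)
          rcases eq_or_ne k b with rfl | hkb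
          · rw [hy'b]
          · rw [hy'k k hka hkb]; exact hy k
        have hy'sum : ∑ k, y' k = 1 := by
          have : ∑ k, y' k = ∑ k, y k + ∑ k, d k := by
            simp [hy', sum_add_distrib]
          rw [this, hsum]
          have : ∑ k, d k = 0 := by
            simp [hd, sum_add_distrib, sum_ite_eq', Ne.symm hab]
          rw [this, add_zero]
        have hy'card : (univ.filter (fun k => y' k ≠ 0)).card ≤ m := by
          have hsub : univ.filter (fun k => y' k ≠ 0) ⊆ S.erase b := by
            intro k hk
            simp only [mem_filter, mem_univ, true_and] at hk
            rcases eq_or_ne k b with rfl | hkb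
            · exact absurd hy'b hk
            rcases eq_or_ne k a with rfl | hka
            · exact mem_erase.mpr ⟨hkb, by simp [hS, ha]⟩
            · rw [hy'k k hka hkb] at hk
              exact mem_erase.mpr ⟨hkb, by simp [hS, hk]⟩
          have : (univ.filter (fun k => y' k ≠ 0)).card ≤ (S.erase b).card :=
            card_le_card hsub
          have hbS : b ∈ S := by simp [hS, hb]
          have := card_erase_of_mem hbS
          omega
        have hstep : ∑ i, ∑ j, A i j * y i * y j ≤ ∑ i, ∑ j, A i j * y' i * y' j := by
          have hdl : ∀ k, ∑ l, A k l * d l = y b * (A k a - A k b) := by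
            intro k
            simp only [hd, mul_add, mul_ite, mul_zero, mul_neg]
            rw [sum_add_distrib, sum_ite_eq' univ a, sum_ite_eq' univ b]
            simp only [mem_univ, if_true]
            ring
          have expand : ∑ i, ∑ j, A i j * y' i * y' j
              = (∑ i, ∑ j, A i j * y i * y j) + 2 * y b * (s a - s b) := by
            have step1 : ∀ k, ∑ l, A k l * y' k * y' l
                = y' k * (s k + y b * (A k a - A k b)) := by
              intro k
              rw [← hdl k]
              have hsk : s k = ∑ l, A k l * y l := rfl
              rw [hsk, ← sum_add_distrib, mul_sum]
              refine sum_congr rfl fun l _ => ?_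
              show A k l * y' k * y' l = y' k * (A k l * y l + A k l * d l)
              have : y' l = y l + d l := rfl
              rw [this]; ring
            rw [sum_congr rfl (fun k _ => step1 k)]
            have step2 : ∀ k, y' k * (s k + y b * (A k a - A k b))
                = y k * s k + y k * (y b * (A k a - A k b)) + d k * s k
                  + d k * (y b * (A k a - A k b)) := by
              intro k; simp only [hy']; ring
            rw [sum_congr rfl (fun k _ => step2 k)]
            rw [sum_add_distrib, sum_add_distrib, sum_add_distrib]
            have t1 : ∑ k, y k * s k = ∑ i, ∑ j, A i j * y i * y j := by
              refine sum_congr rfl fun k _ => ?_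
              rw [hs, mul_sum]
              refine sum_congr rfl fun l _ => by ring
            have t2 : ∑ k, y k * (y b * (A k a - A k b)) = y b * (s a - s b) := by
              have : ∀ k, y k * (y b * (A k a - A k b))
                  = y b * (A a k * y k - A b k * y k) := by
                intro k
                rw [hsym.apply k a, hsym.apply k b]; ring
              rw [sum_congr rfl (fun k _ => this k)]
              rw [← mul_sum, sum_sub_distrib]
            have t3 : ∑ k, d k * s k = y b * (s a - s b) := by
              simp only [hd, add_mul, ite_mul, zero_mul, neg_mul]
              rw [sum_add_distrib, sum_ite_eq' univ a, sum_ite_eq' univ b]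
              simp only [mem_univ, if_true]
              ring
            have t4 : ∑ k, d k * (y b * (A k a - A k b)) = 0 := by
              simp only [hd, add_mul, ite_mul, zero_mul, neg_mul]
              rw [sum_add_distrib, sum_ite_eq' univ a, sum_ite_eq' univ b]
              simp [hab0, hba0, hdiag a, hdiag b, Ne.symm hab]
            rw [t1, t2, t3, t4]
            ring
          rw [expand]
          have : 0 ≤ 2 * y b * (s a - s b) := by
            have : 0 ≤ y b := hy b
            have : 0 < y b := lt_of_le_of_ne this (Ne.symm hb)
            nlinarith
          linarith
        exact hstep.trans (ih y' hy'nn hy'sum hy'card)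
      have hiy : y i ≠ 0 := by simp [hS] at hi; exact hi
      have hjy : y j ≠ 0 := by simp [hS] at hj; exact hj
      rcases le_total (s j) (s i) with h | h
      · exact key i j hij hiy hjy hAij0 hAji0 h
      · exact key j i (Ne.symm hij) hjy hiy hAji0 hAij0 h

/-- The Euclidean (Hermitian) norm on `ℂⁿ`. -/
noncomputable def euclNorm {n : ℕ} (x : Fin n → ℂ) : ℝ :=
  Real.sqrt (∑ i, ‖x i‖ ^ 2)

/-- The Euclidean norm on `ℝⁿ`. -/
noncomputable def euclNormR {n : ℕ} (x : Fin n → ℝ) : ℝ :=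
  Real.sqrt (∑ i, x i ^ 2)

open Finset in
/-- Motzkin–Straus: for a nonzero symmetric 0/1 matrix `A` with zero diagonal, adjacency
matrix of a graph `G` with clique number `κ`, one has `κ ∈ [n]` and both the real and complex
spectral maxima of `f_A(x) = Σ_{i,j} A_{ij} x_i² x_j²` over the unit sphere equal
`1 - 1/κ`. -/
theorem stmt19 {n : ℕ} (A : Matrix (Fin n) (Fin n) ℝ) (hA0 : A ≠ 0)
    (hsym : A.IsSymm) (h01 : ∀ i j, A i j = 0 ∨ A i j = 1) (hdiag : ∀ i, A i i = 0)
    (G : SimpleGraph (Fin n)) (hG : ∀ i j, G.Adj i j ↔ A i j = 1)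
    (κ : ℕ) (hκ : IsGreatest {k : ℕ | ∃ t : Finset (Fin n), G.IsNClique k t} κ) :
    1 ≤ κ ∧ κ ≤ n ∧
    IsGreatest {r : ℝ | ∃ x : Fin n → ℝ, euclNormR x = 1 ∧
        r = ∑ i, ∑ j, A i j * x i ^ 2 * x j ^ 2}
      (1 - 1 / (κ : ℝ)) ∧
    IsGreatest {r : ℝ | ∃ x : Fin n → ℂ, euclNorm x = 1 ∧
        r = ‖(∑ i, ∑ j, (A i j : ℂ) * x i ^ 2 * x j ^ 2)‖}
      (1 - 1 / (κ : ℝ)) := by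
  -- κ ≥ 2, from a nonzero entry of A
  obtain ⟨a, b, hab⟩ : ∃ i j, A i j ≠ 0 := by
    by_contra h
    push_neg at h
    exact hA0 (by ext i j; simp [h i j])
  have hab1 : A a b = 1 := (h01 a b).resolve_left hab
  have habne : a ≠ b := by
    intro h
    rw [h, hdiag b] at hab1
    norm_num at hab1
  have hadj : G.Adj a b := (hG a b).2 hab1
  have hclq2 : G.IsNClique 2 {a, b} := by
    constructor
    · intro x hx y hy hxy
      simp only [coe_insert, coe_singleton, Set.mem_insert_iff, Set.mem_singleton_iff] at hx hy
      rcases hx with rfl | rfl <;> rcases hy with rfl | rfl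
      · exact absurd rfl hxy
      · exact hadj
      · exact hadj.symm
      · exact absurd rfl hxy
    · rw [card_insert_of_notMem (by simp [habne]), card_singleton]
  have hκ2 : 2 ≤ κ := hκ.2 ⟨{a, b}, hclq2⟩
  have hκ1 : 1 ≤ κ := le_trans one_le_two hκ2
  have hκ0 : (κ : ℝ) ≠ 0 := by
    have : (0 : ℝ) < κ := by exact_mod_cast hκ1
    exact ne_of_gt this
  have hAnn : ∀ i j, 0 ≤ A i j := by
    intro i j; rcases h01 i j with h | h <;> rw [h] <;> norm_num
  -- a maximum clique t
  obtain ⟨t, ht⟩ := hκ.1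
  have hκn : κ ≤ n := by
    rw [← ht.2]
    exact le_trans (card_le_univ t) (by simp)
  -- the witness vector
  set c : ℝ := (κ : ℝ)⁻¹ with hc
  have hcnn : 0 ≤ c := inv_nonneg.mpr (Nat.cast_nonneg κ)
  set x : Fin n → ℝ := fun i => if i ∈ t then Real.sqrt c else 0 with hxdef
  have hx2 : ∀ i, x i ^ 2 = if i ∈ t then c else 0 := by
    intro i
    by_cases h : i ∈ t <;> simp [hxdef, h, Real.sq_sqrt hcnn]
  have hsum2 : ∑ i, x i ^ 2 = 1 := by
    simp only [hx2]
    rw [sum_ite_mem, univ_inter, sum_const, ht.2, nsmul_eq_mul, hc]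
    exact mul_inv_cancel₀ hκ0
  have hnorm : euclNormR x = 1 := by
    rw [euclNormR, hsum2, Real.sqrt_one]
  have hval : ∑ i, ∑ j, A i j * x i ^ 2 * x j ^ 2 = 1 - 1 / (κ : ℝ) := by
    have step : ∑ i, ∑ j, A i j * x i ^ 2 * x j ^ 2 = ∑ i ∈ t, ∑ j ∈ t, A i j * c * c := by
      rw [← sum_subset (subset_univ t) (fun k _ hk => ?_)]
      · refine sum_congr rfl fun i hi => ?_
        rw [← sum_subset (subset_univ t) (fun k _ hk => ?_)]
        · refine sum_congr rfl fun j hj => by rw [hx2, hx2, if_pos hi, if_pos hj]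
        · rw [hx2 k, if_neg hk]; ring
      · refine sum_eq_zero fun j _ => ?_
        rw [hx2 k, if_neg hk]; ring
    have step2 : ∀ i ∈ t, ∀ j ∈ t, A i j * c * c
        = c * c - (if i = j then c * c else 0) := by
      intro i hi j hj
      by_cases hij : i = j
      · subst hij; simp [hdiag i]
      · have : G.Adj i j := ht.1 (mem_coe.mpr hi) (mem_coe.mpr hj) hij
        rw [(hG i j).1 this]
        simp [hij]
    have step3 : ∑ i ∈ t, ∑ j ∈ t, A i j * c * c
        = (t.card : ℝ) * ((t.card : ℝ) * (c * c)) - (t.card : ℝ) * (c * c) := by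
      calc ∑ i ∈ t, ∑ j ∈ t, A i j * c * c
          = ∑ i ∈ t, ∑ j ∈ t, (c * c - if i = j then c * c else 0) := by
            refine sum_congr rfl fun i hi => sum_congr rfl fun j hj => step2 i hi j hj
        _ = ∑ i ∈ t, ((t.card : ℝ) * (c * c) - c * c) := by
            refine sum_congr rfl fun i hi => ?_
            rw [sum_sub_distrib, sum_const, sum_ite_eq, if_pos hi, nsmul_eq_mul]
        _ = (t.card : ℝ) * ((t.card : ℝ) * (c * c) - c * c) := by
            rw [sum_const, nsmul_eq_mul]
        _ = (t.card : ℝ) * ((t.card : ℝ) * (c * c)) - (t.card : ℝ) * (c * c) := by ring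
    rw [step, step3, ht.2, hc]
    field_simp
  -- complex witness
  set xc : Fin n → ℂ := fun i => ((x i : ℝ) : ℂ) with hxc
  have hnormc : euclNorm xc = 1 := by
    rw [euclNorm]
    have : ∀ i, ‖xc i‖ ^ 2 = x i ^ 2 := by
      intro i
      rw [hxc]
      simp [sq_abs]
    rw [sum_congr rfl fun i _ => this i, hsum2, Real.sqrt_one]
  have hvalc : ‖∑ i, ∑ j, (A i j : ℂ) * xc i ^ 2 * xc j ^ 2‖
      = 1 - 1 / (κ : ℝ) := by
    have hcast : ∑ i, ∑ j, (A i j : ℂ) * xc i ^ 2 * xc j ^ 2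
        = ((∑ i, ∑ j, A i j * x i ^ 2 * x j ^ 2 : ℝ) : ℂ) := by
      rw [hxc]
      push_cast
      rfl
    rw [hcast, hval, Complex.norm_real, Real.norm_eq_abs, abs_of_nonneg]
    have : 1 / (κ : ℝ) ≤ 1 := by
      rw [div_le_one (by positivity)]
      exact_mod_cast hκ1
    linarith
  refine ⟨hκ1, hκn, ⟨⟨x, hnorm, hval.symm⟩, ?_⟩, ⟨⟨xc, hnormc, hvalc.symm⟩, ?_⟩⟩
  · -- real upper bound
    rintro r ⟨z, hz, rfl⟩
    have hsumz : ∑ i, z i ^ 2 = 1 := Real.sqrt_eq_one.mp hz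
    have := ms_aux A hsym h01 hdiag G hG κ hκ n (fun i => z i ^ 2)
      (fun i => sq_nonneg _) hsumz (le_trans (card_filter_le _ _) (by simp))
    simpa using this
  · -- complex upper bound
    rintro r ⟨z, hz, rfl⟩
    have hsumz : ∑ i, ‖z i‖ ^ 2 = 1 := Real.sqrt_eq_one.mp hz
    have hbound := ms_aux A hsym h01 hdiag G hG κ hκ n (fun i => ‖z i‖ ^ 2)
      (fun i => sq_nonneg _) hsumz (le_trans (card_filter_le _ _) (by simp))
    calc ‖∑ i, ∑ j, (A i j : ℂ) * z i ^ 2 * z j ^ 2‖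
        ≤ ∑ i, ‖∑ j, (A i j : ℂ) * z i ^ 2 * z j ^ 2‖ :=
          norm_sum_le _ _
      _ ≤ ∑ i, ∑ j, ‖(A i j : ℂ) * z i ^ 2 * z j ^ 2‖ :=
          sum_le_sum fun i _ => norm_sum_le _ _
      _ = ∑ i, ∑ j, A i j * ‖z i‖ ^ 2 * ‖z j‖ ^ 2 := by
          refine sum_congr rfl fun i _ => sum_congr rfl fun j _ => ?_
          rw [norm_mul, norm_mul, norm_pow, norm_pow, Complex.norm_real, Real.norm_eq_abs,
            abs_of_nonneg (hAnn i j)]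
      _ ≤ 1 - 1 / (κ : ℝ) := hbound
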